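/- Let M be a compact connected oriented Riemannian manifold with boundary, and let K be the space of harmonic functions ξ on M (Δξ = 0) that are locally constant on ∂M. Then the map ev : K → ℝ^{b₀(∂M)} sending ξ to the vector of integrals (∫_{N_i} t_i(⋆ dξ))_i has kernel exactly the constant functions, and its image lies in the hyperplane {r : Σᵢ rᵢ = 0}; in particular ev restricts to an isomorphism from K₀ = {ξ ∈ K : Σᵢ cᵢ(ξ) = 0} onto this hyperplane, where cᵢ(ξ) is the boundary value on N_i. -/

import Mathlib

/-- Let `K` be the space of harmonic functions on `M` that are
locally constant on `∂M` (solutions of the Dirichlet problem with constant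
boundary value `cᵢ(ξ)` on each boundary component `N i`), and let
`ev : K → ℝ^{b₀(∂M)}`, `ev(ξ)ᵢ = ∫_{N i} tᵢ(⋆dξ)`.  Then `ker ev` is exactly
the constant functions, the image of `ev` lies in the hyperplane
`{r : Σᵢ rᵢ = 0}`, and `ev` restricts to an isomorphism from
`K₀ = {ξ ∈ K : Σᵢ cᵢ(ξ) = 0}` onto that hyperplane.

Abstraction: `Ω0, Ω1` are the `L²` pre-Hilbert spaces of functions and
1-forms on `M`; `d` the differential, `dstar` the codifferential, `bInt i η
= ∫_{N i} tᵢ(⋆η)`; `cval ξ` records the (locally constant) boundary values of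
`ξ ∈ K`; `const r` is the constant function `r` and connectedness of `M` is
`hconn`; harmonicity of `K` is `hharm`; unique solvability of the Dirichlet
problem is `hdirichlet`; and `hGreen` is Green's formula
`∫_M ⟨dξ, η⟩ = ∫_M ⟨ξ, d*η⟩ + Σᵢ cᵢ(ξ) ∫_{N i} tᵢ(⋆η)` for `ξ ∈ K`. -/
theorem harmonic_boundary_evaluation
    {Ω0 Ω1 : Type*}
    [NormedAddCommGroup Ω0] [InnerProductSpace ℝ Ω0]
    [NormedAddCommGroup Ω1] [InnerProductSpace ℝ Ω1]
    {ι : Type*} [Fintype ι] [Nonempty ι]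
    (d : Ω0 →ₗ[ℝ] Ω1) (dstar : Ω1 →ₗ[ℝ] Ω0)
    (bInt : ι → Ω1 →ₗ[ℝ] ℝ)
    (K : Submodule ℝ Ω0)
    (cval : Ω0 →ₗ[ℝ] (ι → ℝ)) (const : ℝ →ₗ[ℝ] Ω0)
    (hharm : ∀ ξ ∈ K, dstar (d ξ) = 0)
    (hconstK : ∀ r : ℝ, const r ∈ K)
    (hcval_const : ∀ r : ℝ, cval (const r) = fun _ => r)
    (hd_const : ∀ r : ℝ, d (const r) = 0)
    (hconn : ∀ ξ : Ω0, d ξ = 0 → ∃ r : ℝ, ξ = const r)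
    (hdirichlet : Function.Bijective fun ξ : K => cval (ξ : Ω0))
    (hGreen : ∀ ξ ∈ K, ∀ η : Ω1,
      (inner ℝ (d ξ) η : ℝ) = inner ℝ ξ (dstar η) + ∑ i, cval ξ i * bInt i η) :
    -- (1) the kernel of ev consists exactly of the constant functions
    (∀ ξ ∈ K, (∀ i, bInt i (d ξ) = 0) ↔ ∃ r : ℝ, ξ = const r) ∧
    -- (2) the image of ev lies in the hyperplane {r : Σᵢ rᵢ = 0}
    (∀ ξ ∈ K, ∑ i, bInt i (d ξ) = 0) ∧
    -- (3) ev restricts to an isomorphism K₀ ≅ {r : Σᵢ rᵢ = 0}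
    Nonempty { e :
        ↥(K ⊓ LinearMap.ker
            ((∑ i : ι, (LinearMap.proj i : (ι → ℝ) →ₗ[ℝ] ℝ)) ∘ₗ cval)) ≃ₗ[ℝ]
          ↥(LinearMap.ker (∑ i : ι, (LinearMap.proj i : (ι → ℝ) →ₗ[ℝ] ℝ))) //
        ∀ ξ, ∀ i : ι, ((e ξ : ι → ℝ) i) = bInt i (d (ξ : Ω0)) } := by
  classical
  have hcard : (0 : ℝ) < (Fintype.card ι : ℝ) := by
    exact_mod_cast Fintype.card_pos
  -- (2)
  have fact2 : ∀ ξ ∈ K, ∑ i, bInt i (d ξ) = 0 := by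
    intro ξ hξ
    have h := hGreen (const 1) (hconstK 1) (d ξ)
    rw [hd_const, hharm ξ hξ, hcval_const] at h
    simpa using h.symm
  -- part of (1)
  have fact1 : ∀ ξ ∈ K, (∀ i, bInt i (d ξ) = 0) → d ξ = 0 := by
    intro ξ hξ h0
    have h := hGreen ξ hξ (d ξ)
    rw [hharm ξ hξ] at h
    simp only [inner_zero_right, h0, mul_zero, Finset.sum_const_zero, add_zero] at h
    exact inner_self_eq_zero.mp h
  refine ⟨?_, fact2, ?_⟩
  · intro ξ hξ
    constructor
    · intro h0
      exact hconn ξ (fact1 ξ hξ h0)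
    · rintro ⟨r, rfl⟩ i
      rw [hd_const]
      simp
  -- (3)
  set sp : (ι → ℝ) →ₗ[ℝ] ℝ := ∑ i : ι, (LinearMap.proj i : (ι → ℝ) →ₗ[ℝ] ℝ) with hsp
  have hsp_apply : ∀ v : ι → ℝ, sp v = ∑ i, v i := by
    intro v; simp [hsp, LinearMap.sum_apply]
  set g : Ω0 →ₗ[ℝ] ℝ := sp ∘ₗ cval with hg
  set K0 : Submodule ℝ Ω0 := K ⊓ LinearMap.ker g with hK0
  set H : Submodule ℝ (ι → ℝ) := LinearMap.ker sp with hH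
  -- K is finite dimensional of rank card ι
  let cvalK : K →ₗ[ℝ] (ι → ℝ) := cval ∘ₗ K.subtype
  have hcvalK : Function.Bijective cvalK := hdirichlet
  let eK : K ≃ₗ[ℝ] (ι → ℝ) := LinearEquiv.ofBijective cvalK hcvalK
  have : FiniteDimensional ℝ K := LinearEquiv.finiteDimensional eK.symm
  have hKrank : Module.finrank ℝ K = Fintype.card ι := by
    rw [eK.finrank_eq]; simp
  -- finrank H = card ι - 1
  have hsp_surj : Function.Surjective sp := by
    intro r
    refine ⟨fun _ => r / (Fintype.card ι : ℝ), ?_⟩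
    rw [hsp_apply]
    rw [Finset.sum_const, Finset.card_univ, nsmul_eq_mul]
    field_simp [hcard.ne']
  have hHrank : Module.finrank ℝ H = Fintype.card ι - 1 := by
    have := LinearMap.finrank_range_add_finrank_ker sp
    rw [LinearMap.range_eq_top.mpr hsp_surj, finrank_top, Module.finrank_self,
      Module.finrank_fintype_fun_eq_card] at this
    rw [hH]
    omega
  -- K0 ≃ ker of ψ := g restricted to K
  let ψ : K →ₗ[ℝ] ℝ := g ∘ₗ K.subtype
  have hker_eq : LinearMap.ker ψ = Submodule.comap K.subtype K0 := by
    ext x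
    simp [ψ, hK0, x.2]
  let eker : ↥(LinearMap.ker ψ) ≃ₗ[ℝ] K0 :=
    (LinearEquiv.ofEq _ _ hker_eq).trans
      (Submodule.comapSubtypeEquivOfLe (inf_le_left : K0 ≤ K))
  have : FiniteDimensional ℝ K0 := LinearEquiv.finiteDimensional eker
  have hψ_surj : Function.Surjective ψ := by
    intro r
    refine ⟨⟨const (r / (Fintype.card ι : ℝ)), hconstK _⟩, ?_⟩
    show g (const _) = r
    rw [hg, LinearMap.comp_apply, hcval_const, hsp_apply]
    rw [Finset.sum_const, Finset.card_univ, nsmul_eq_mul]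
    field_simp [hcard.ne']
  have hK0rank : Module.finrank ℝ K0 = Fintype.card ι - 1 := by
    have h1 := LinearMap.finrank_range_add_finrank_ker ψ
    rw [LinearMap.range_eq_top.mpr hψ_surj, finrank_top, Module.finrank_self, hKrank] at h1
    rw [← eker.finrank_eq]
    omega
  -- the evaluation map
  let ev : Ω0 →ₗ[ℝ] (ι → ℝ) := LinearMap.pi (fun i => (bInt i) ∘ₗ d)
  have hev_apply : ∀ ξ i, ev ξ i = bInt i (d ξ) := fun _ _ => rfl
  have hmemH : ∀ ξ : K0, ev (ξ : Ω0) ∈ H := by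
    intro ξ
    have hξK : (ξ : Ω0) ∈ K := ξ.2.1
    simp only [hH, LinearMap.mem_ker, hsp_apply]
    exact fact2 _ hξK
  let F : K0 →ₗ[ℝ] H := (ev ∘ₗ K0.subtype).codRestrict H hmemH
  have hF_inj : Function.Injective F := by
    intro x y hxy
    rw [← sub_eq_zero, ← map_sub] at hxy
    set z := x - y with hz
    have hzK : (z : Ω0) ∈ K := z.2.1
    have hz0 : ∀ i, bInt i (d (z : Ω0)) = 0 := by
      intro i
      have h1 : ((F z : ι → ℝ)) i = 0 := by rw [hxy]; rfl
      exact h1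
    obtain ⟨r, hr⟩ := hconn _ (fact1 _ hzK hz0)
    have hgz : g (z : Ω0) = 0 := z.2.2
    have : (Fintype.card ι : ℝ) * r = 0 := by
      rw [hr] at hgz
      rw [hg, LinearMap.comp_apply, hcval_const, hsp_apply] at hgz
      simpa [mul_comm] using hgz
    have hr0 : r = 0 := by
      rcases mul_eq_zero.mp this with h | h
      · exact absurd h (ne_of_gt hcard)
      · exact h
    have : (z : Ω0) = 0 := by rw [hr, hr0, map_zero]
    have : z = 0 := Subtype.ext this
    rwa [hz, sub_eq_zero] at this
  have hrank : Module.finrank ℝ K0 = Module.finrank ℝ H := by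
    rw [hK0rank, hHrank]
  refine ⟨⟨F.linearEquivOfInjective hF_inj hrank, ?_⟩⟩
  intro ξ i
  rw [LinearMap.linearEquivOfInjective_apply]
  rfl
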